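/- Fix an integer p ≥ 2. Then the p-adic entropy function h is continuous on [0, p−1]. -/

import Mathlib

open Filter MeasureTheory Set
open scoped ENNReal

noncomputable section

/-- Number of words of length `n` over the alphabet `{0, …, p-1}` whose digit sum lies
strictly between `n(α-δ)` and `n(α+δ)`; this is `h(α,n,δ)`. -/
def hcount (p n : ℕ) (α δ : ℝ) : ℕ :=
  Nat.card {w : Fin n → Fin p //
    (n : ℝ) * (α - δ) < ∑ i, ((w i : ℕ) : ℝ) ∧ (∑ i, ((w i : ℕ) : ℝ)) < n * (α + δ)}

/-- The `p`-adic entropy function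
`h(α) = lim_{δ→0} limsup_{n→∞} log h(α,n,δ) / (n log p)`.
Since the inner quantity is nondecreasing in `δ`, the limit as `δ → 0⁺` equals the
infimum over `δ > 0`. -/
def entropy (p : ℕ) (α : ℝ) : ℝ :=
  ⨅ δ : {δ : ℝ // 0 < δ},
    limsup (fun n : ℕ => Real.log (hcount p n α δ) / (n * Real.log p)) atTop

/-- Number of words of length `n` over `{0, …, p-1}` with digit sum `< n(α+δ)`;
this is `h̄(α,n,δ)`. -/
def hbarCount (p n : ℕ) (α δ : ℝ) : ℕ :=
  Nat.card {w : Fin n → Fin p // (∑ i, ((w i : ℕ) : ℝ)) < n * (α + δ)}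

/-- The `p`-adic upper entropy function
`h̄(α) = lim_{δ→0} limsup_{n→∞} log h̄(α,n,δ) / (n log p)`, the limit in `δ`
being the infimum over `δ > 0` by monotonicity in `δ`. -/
def upperEntropy (p : ℕ) (α : ℝ) : ℝ :=
  ⨅ δ : {δ : ℝ // 0 < δ},
    limsup (fun n : ℕ => Real.log (hbarCount p n α δ) / (n * Real.log p)) atTop

/-- Number of words of length `n` over `{0, …, p-1}` with digit sum `> n(α-δ)`;
this is `h̲(α,n,δ)`. -/
def hlowCount (p n : ℕ) (α δ : ℝ) : ℕ :=
  Nat.card {w : Fin n → Fin p // (n : ℝ) * (α - δ) < ∑ i, ((w i : ℕ) : ℝ)}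

/-- The `p`-adic lower entropy function
`h̲(α) = lim_{δ→0} liminf_{n→∞} log h̲(α,n,δ) / (n log p)`, the limit in `δ`
being the infimum over `δ > 0` by monotonicity in `δ`. -/
def lowerEntropy (p : ℕ) (α : ℝ) : ℝ :=
  ⨅ δ : {δ : ℝ // 0 < δ},
    liminf (fun n : ℕ => Real.log (hlowCount p n α δ) / (n * Real.log p)) atTop

/-- The `(n+1)`-th digit `x_{n+1} ∈ {0,…,p-1}` of the non-terminating `p`-adic expansion
`x = 0.x₁x₂x₃…` of `x ∈ [0,1]` (the expansion not ending in all zeros). -/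
def padicDigit (p : ℕ) (x : ℝ) (n : ℕ) : ℤ :=
  (⌈x * p ^ (n + 1)⌉ - 1) - p * (⌈x * p ^ n⌉ - 1)

/-- `S_n(T^m x) = x_{m+1} + ⋯ + x_{m+n}`, the digit sum of length `n` after shifting
`m` times. In particular `msum p x 0 n = S_n(x)`. -/
def msum (p : ℕ) (x : ℝ) (m n : ℕ) : ℤ :=
  ∑ i ∈ Finset.range n, padicDigit p x (m + i)

/-- The `n`-th lower moving digit mean `M̲ₙ(x) = liminf_{m→∞} S_n(T^m x)/n`. -/
def lowerMn (p : ℕ) (x : ℝ) (n : ℕ) : ℝ :=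
  liminf (fun m : ℕ => (msum p x m n : ℝ) / n) atTop

/-- The `n`-th upper moving digit mean `M̄ₙ(x) = limsup_{m→∞} S_n(T^m x)/n`. -/
def upperMn (p : ℕ) (x : ℝ) (n : ℕ) : ℝ :=
  limsup (fun m : ℕ => (msum p x m n : ℝ) / n) atTop

/-- The lower moving digit mean `M̲(x) = lim_{n→∞} M̲ₙ(x)`; the limit exists by
subadditivity, hence equals the `liminf`. -/
def lowerM (p : ℕ) (x : ℝ) : ℝ := liminf (fun n : ℕ => lowerMn p x n) atTop

/-- The upper moving digit mean `M̄(x) = lim_{n→∞} M̄ₙ(x)`; the limit exists by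
subadditivity, hence equals the `limsup`. -/
def upperM (p : ℕ) (x : ℝ) : ℝ := limsup (fun n : ℕ => upperMn p x n) atTop

/-- The lower digit mean `A̲(x) = liminf_{n→∞} S_n(x)/n`. -/
def lowerA (p : ℕ) (x : ℝ) : ℝ := liminf (fun n : ℕ => (msum p x 0 n : ℝ) / n) atTop

/-- The upper digit mean `Ā(x) = limsup_{n→∞} S_n(x)/n`. -/
def upperA (p : ℕ) (x : ℝ) : ℝ := limsup (fun n : ℕ => (msum p x 0 n : ℝ) / n) atTop

/-- The Banach set `B(α,β) = {x ∈ [0,1] : M̲(x) = α, M̄(x) = β}`. -/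
def BanachSet (p : ℕ) (α β : ℝ) : Set ℝ :=
  {x | x ∈ Icc (0 : ℝ) 1 ∧ lowerM p x = α ∧ upperM p x = β}


namespace EntropyCont

variable {p : ℕ}

lemma log_nat_mono {a b : ℕ} (h : a ≤ b) : Real.log a ≤ Real.log b := by
  rcases Nat.eq_zero_or_pos a with ha | ha
  · simpa [ha] using Real.log_natCast_nonneg b
  · exact Real.log_le_log (by exact_mod_cast ha) (by exact_mod_cast h)

lemma hcount_le_pow (p n : ℕ) (α δ : ℝ) : hcount p n α δ ≤ p ^ n := by
  rw [hcount]
  calc Nat.card {w : Fin n → Fin p //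
      (n : ℝ) * (α - δ) < ∑ i, ((w i : ℕ) : ℝ) ∧ (∑ i, ((w i : ℕ) : ℝ)) < n * (α + δ)}
      ≤ Nat.card (Fin n → Fin p) :=
        Nat.card_le_card_of_injective _ Subtype.val_injective
    _ = p ^ n := by simp [Nat.card_eq_fintype_card]

lemma hcount_le_hcount (p n : ℕ) {α δ α' δ' : ℝ} (h1 : α' - δ' ≤ α - δ)
    (h2 : α + δ ≤ α' + δ') : hcount p n α δ ≤ hcount p n α' δ' := by
  rw [hcount, hcount]
  refine Nat.card_le_card_of_injective
    (fun w => ⟨w.1, ?_, ?_⟩) (fun a b hab => Subtype.ext (by simpa using congrArg Subtype.val hab))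
  · calc (n : ℝ) * (α' - δ') ≤ (n : ℝ) * (α - δ) :=
        mul_le_mul_of_nonneg_left h1 (Nat.cast_nonneg n)
      _ < _ := w.2.1
  · calc (∑ i, ((w.1 i : ℕ) : ℝ)) < n * (α + δ) := w.2.2
      _ ≤ (n : ℝ) * (α' + δ') := mul_le_mul_of_nonneg_left h2 (Nat.cast_nonneg n)

lemma hcount_mul_le (p k m : ℕ) {α δ α₁ δ₁ α₂ δ₂ : ℝ}
    (h1 : ((k + m : ℕ) : ℝ) * (α - δ) ≤ k * (α₁ - δ₁) + m * (α₂ - δ₂))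
    (h2 : (k : ℝ) * (α₁ + δ₁) + m * (α₂ + δ₂) ≤ ((k + m : ℕ) : ℝ) * (α + δ)) :
    hcount p k α₁ δ₁ * hcount p m α₂ δ₂ ≤ hcount p (k + m) α δ := by
  rw [hcount, hcount, hcount, ← Nat.card_prod]
  have happ : ∀ (u : Fin k → Fin p) (v : Fin m → Fin p),
      ∑ i : Fin (k + m), (((Fin.append u v i : Fin p) : ℕ) : ℝ)
        = (∑ i, ((u i : ℕ) : ℝ)) + ∑ i, ((v i : ℕ) : ℝ) := by
    intro u v
    rw [Fin.sum_univ_add]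
    simp [Fin.append_left, Fin.append_right]
  refine Nat.card_le_card_of_injective (fun uv => ⟨Fin.append uv.1.1 uv.2.1, ?_, ?_⟩) ?_
  · rw [happ]
    calc ((k + m : ℕ) : ℝ) * (α - δ) ≤ k * (α₁ - δ₁) + m * (α₂ - δ₂) := h1
      _ < _ := add_lt_add uv.1.2.1 uv.2.2.1
  · rw [happ]
    calc (∑ i, ((uv.1.1 i : ℕ) : ℝ)) + ∑ i, ((uv.2.1 i : ℕ) : ℝ)
        < (k : ℝ) * (α₁ + δ₁) + m * (α₂ + δ₂) := add_lt_add uv.1.2.2 uv.2.2.2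
      _ ≤ _ := h2
  · rintro ⟨⟨u, hu⟩, ⟨v, hv⟩⟩ ⟨⟨u', hu'⟩, ⟨v', hv'⟩⟩ hab
    have hab' := congrArg Subtype.val hab
    simp only at hab'
    have hu2 : u = u' := by
      funext i
      have := congrFun hab' (Fin.castAdd m i)
      simpa [Fin.append_left] using this
    have hv2 : v = v' := by
      funext i
      have := congrFun hab' (Fin.natAdd k i)
      simpa [Fin.append_right] using this
    simp [hu2, hv2]

lemma exists_word {p : ℕ} (hp : 1 ≤ p) :
    ∀ (n s : ℕ), s ≤ n * (p - 1) → ∃ w : Fin n → Fin p, ∑ i, (w i : ℕ) = s := by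
  intro n
  induction n with
  | zero => intro s hs; exact ⟨Fin.elim0, by simpa using (Nat.le_zero.1 (by simpa using hs)).symm⟩
  | succ n ih =>
    intro s hs
    have hd : min s (p - 1) < p := by omega
    have hrec : s - min s (p - 1) ≤ n * (p - 1) := by
      rcases le_or_gt s (p - 1) with h | h
      · simp [min_eq_left h]
      · have : min s (p-1) = p - 1 := min_eq_right h.le
        rw [this]
        have := hs
        rw [Nat.succ_mul] at this
        omega
    obtain ⟨w, hw⟩ := ih (s - min s (p - 1)) hrec
    refine ⟨Fin.cons ⟨min s (p - 1), hd⟩ w, ?_⟩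
    rw [Fin.sum_univ_succ]
    simp only [Fin.cons_zero, Fin.cons_succ]
    rw [hw]
    omega

lemma one_le_hcount {p : ℕ} (hp : 2 ≤ p) {n : ℕ} {α δ : ℝ} (hα0 : 0 ≤ α)
    (hα1 : α ≤ (p : ℝ) - 1) (h : 1 < (n : ℝ) * δ) : 1 ≤ hcount p n α δ := by
  have hz0 : (0 : ℤ) ≤ ⌊(n : ℝ) * α⌋ := Int.le_floor.2 (by simpa using mul_nonneg (Nat.cast_nonneg n) hα0)
  set s : ℕ := (⌊(n : ℝ) * α⌋).toNat with hs
  have hsr : (s : ℝ) = ⌊(n : ℝ) * α⌋ := by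
    rw [hs]; exact_mod_cast congrArg (Int.cast : ℤ → ℝ) (Int.toNat_of_nonneg hz0)
  have hsle : (s : ℝ) ≤ (n : ℝ) * α := by rw [hsr]; exact Int.floor_le _
  have hsgt : (n : ℝ) * α - 1 < s := by rw [hsr]; exact Int.sub_one_lt_floor _
  have hsub : s ≤ n * (p - 1) := by
    have h1 : (s : ℝ) ≤ (n : ℝ) * ((p : ℝ) - 1) :=
      hsle.trans (mul_le_mul_of_nonneg_left hα1 (Nat.cast_nonneg n))
    have h2 : ((n * (p - 1) : ℕ) : ℝ) = (n : ℝ) * ((p : ℝ) - 1) := by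
      push_cast [Nat.cast_sub (by omega : 1 ≤ p)]
      ring
    exact_mod_cast h1.trans_eq h2.symm
  obtain ⟨w, hw⟩ := exists_word (by omega) n s hsub
  have hsum : ∑ i, ((w i : ℕ) : ℝ) = (s : ℝ) := by rw [← hw]; push_cast; ring
  have hne : Nonempty {w : Fin n → Fin p //
      (n : ℝ) * (α - δ) < ∑ i, ((w i : ℕ) : ℝ) ∧ (∑ i, ((w i : ℕ) : ℝ)) < n * (α + δ)} := by
    refine ⟨⟨w, ?_, ?_⟩⟩
    · rw [hsum]; nlinarith
    · rw [hsum]; nlinarith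
  rw [hcount]
  exact Nat.one_le_iff_ne_zero.2 (Nat.card_pos (α := {w : Fin n → Fin p //
      (n : ℝ) * (α - δ) < ∑ i, ((w i : ℕ) : ℝ) ∧ (∑ i, ((w i : ℕ) : ℝ)) < n * (α + δ)})).ne'


def EL (p : ℕ) (α δ : ℝ) (n : ℕ) : ℝ := Real.log (hcount p n α δ) / (n * Real.log p)

def g (p : ℕ) (α δ : ℝ) : ℝ := limsup (EL p α δ) atTop

lemma entropy_def (p : ℕ) (α : ℝ) : entropy p α = ⨅ δ : {δ : ℝ // 0 < δ}, g p α δ := rfl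

instance : Nonempty {δ : ℝ // 0 < δ} := ⟨⟨1, one_pos⟩⟩

variable {p : ℕ}

lemma logp_pos (hp : 2 ≤ p) : 0 < Real.log p :=
  Real.log_pos (by exact_mod_cast Nat.lt_of_lt_of_le one_lt_two hp)

lemma EL_nonneg (p : ℕ) (α δ : ℝ) (n : ℕ) : 0 ≤ EL p α δ n :=
  div_nonneg (Real.log_natCast_nonneg _)
    (mul_nonneg (Nat.cast_nonneg n) (Real.log_natCast_nonneg p))

lemma EL_le_one (hp : 2 ≤ p) (α δ : ℝ) (n : ℕ) : EL p α δ n ≤ 1 := by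
  rcases Nat.eq_zero_or_pos n with hn | hn
  · simp [EL, hn]
  · rw [EL, div_le_one (mul_pos (by exact_mod_cast hn) (logp_pos hp))]
    calc Real.log (hcount p n α δ) ≤ Real.log ((p ^ n : ℕ) : ℝ) :=
          log_nat_mono (hcount_le_pow p n α δ)
      _ = n * Real.log p := by push_cast; exact Real.log_pow p n

lemma EL_bddU (hp : 2 ≤ p) (α δ : ℝ) : IsBoundedUnder (· ≤ ·) atTop (EL p α δ) :=
  isBoundedUnder_of ⟨1, EL_le_one hp α δ⟩

lemma EL_bddL (α δ : ℝ) : IsBoundedUnder (· ≥ ·) atTop (EL p α δ) :=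
  isBoundedUnder_of ⟨0, EL_nonneg p α δ⟩

lemma EL_cobdd (α δ : ℝ) : IsCoboundedUnder (· ≤ ·) atTop (EL p α δ) :=
  (EL_bddL α δ).isCoboundedUnder_le

lemma g_nonneg (hp : 2 ≤ p) (α δ : ℝ) : 0 ≤ g p α δ :=
  le_limsup_of_frequently_le (Frequently.of_forall (EL_nonneg p α δ)) (EL_bddU hp α δ)

lemma g_le_one (hp : 2 ≤ p) (α δ : ℝ) : g p α δ ≤ 1 :=
  limsup_le_of_le (EL_cobdd α δ) (Eventually.of_forall (EL_le_one hp α δ))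

lemma g_mono (hp : 2 ≤ p) {α δ α' δ' : ℝ} (h1 : α' - δ' ≤ α - δ) (h2 : α + δ ≤ α' + δ') :
    g p α δ ≤ g p α' δ' := by
  refine limsup_le_limsup (Eventually.of_forall fun n => ?_) (EL_cobdd α δ) (EL_bddU hp α' δ')
  rw [EL, EL, div_eq_mul_inv, div_eq_mul_inv]
  exact mul_le_mul_of_nonneg_right (log_nat_mono (hcount_le_hcount p n h1 h2))
    (by positivity)

lemma bddBelow_g (hp : 2 ≤ p) (α : ℝ) :
    BddBelow (Set.range fun δ : {δ : ℝ // 0 < δ} => g p α δ) := by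
  refine ⟨0, ?_⟩
  rintro x ⟨δ, rfl⟩
  exact g_nonneg hp α δ

lemma entropy_le_g (hp : 2 ≤ p) (α : ℝ) {δ : ℝ} (hδ : 0 < δ) : entropy p α ≤ g p α δ := by
  rw [entropy_def]
  exact ciInf_le (bddBelow_g hp α) ⟨δ, hδ⟩

lemma entropy_nonneg (hp : 2 ≤ p) (α : ℝ) : 0 ≤ entropy p α := by
  rw [entropy_def]
  exact le_ciInf fun δ => g_nonneg hp α δ

lemma entropy_le_one (hp : 2 ≤ p) (α : ℝ) : entropy p α ≤ 1 :=
  (entropy_le_g hp α one_pos).trans (g_le_one hp α 1)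

lemma usc (hp : 2 ≤ p) (α₀ : ℝ) {ε : ℝ} (hε : 0 < ε) :
    ∃ θ > 0, ∀ α : ℝ, |α - α₀| ≤ θ → entropy p α ≤ entropy p α₀ + ε := by
  have h : entropy p α₀ < entropy p α₀ + ε := lt_add_of_pos_right _ hε
  rw [entropy_def] at h
  obtain ⟨⟨δ', hδ'⟩, hlt⟩ := exists_lt_of_ciInf_lt h
  refine ⟨δ' / 2, by positivity, fun α hα => ?_⟩
  have h1 : entropy p α ≤ g p α (δ' / 2) := entropy_le_g hp α (by positivity)
  have h2 : g p α (δ' / 2) ≤ g p α₀ δ' := by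
    apply g_mono hp
    · have := abs_le.1 hα; linarith [this.1, this.2]
    · have := abs_le.1 hα; linarith [this.1, this.2]
  exact (h1.trans h2).trans hlt.le

lemma hcount_rev_le (n : ℕ) (a δ : ℝ) :
    hcount p n ((p : ℝ) - 1 - a) δ ≤ hcount p n a δ := by
  have hrevsum : ∀ w : Fin n → Fin p,
      ∑ i, (((w i).rev : ℕ) : ℝ) = n * ((p : ℝ) - 1) - ∑ i, ((w i : ℕ) : ℝ) := by
    intro w
    have h : ∀ i, (((w i).rev : ℕ) : ℝ) = ((p : ℝ) - 1) - ((w i : ℕ) : ℝ) := by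
      intro i
      have hv : ((w i).rev : ℕ) = p - ((w i : ℕ) + 1) := rfl
      have hle : ((w i : ℕ) + 1) ≤ p := (w i).2
      rw [hv]
      push_cast [Nat.cast_sub hle]
      ring
    rw [Finset.sum_congr rfl (fun i _ => h i), Finset.sum_sub_distrib]
    simp [Finset.card_univ, mul_comm]; ring
  rw [hcount, hcount]
  refine Nat.card_le_card_of_injective (fun w => ⟨fun i => (w.1 i).rev, ?_, ?_⟩) ?_
  · rw [hrevsum w.1]
    have := w.2.2
    nlinarith [this]
  · rw [hrevsum w.1]
    have := w.2.1
    nlinarith [this]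
  · intro u v huv
    apply Subtype.ext
    funext i
    have := congrFun (by simpa using congrArg Subtype.val huv) i
    simpa using Fin.rev_injective this

lemma hcount_rev (hp : 2 ≤ p) (n : ℕ) (α δ : ℝ) :
    hcount p n ((p : ℝ) - 1 - α) δ = hcount p n α δ := by
  refine le_antisymm (hcount_rev_le n α δ) ?_
  have h := hcount_rev_le (p := p) n ((p : ℝ) - 1 - α) δ
  have he : (p : ℝ) - 1 - ((p : ℝ) - 1 - α) = α := by ring
  rwa [he] at h

lemma entropy_rev (hp : 2 ≤ p) (α : ℝ) : entropy p ((p : ℝ) - 1 - α) = entropy p α := by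
  rw [entropy_def, entropy_def]
  refine iInf_congr fun δ => ?_
  rw [g, g]
  congr 1
  funext n
  rw [EL, EL, hcount_rev hp]


-- sum over all words of t^(digit sum) equals (geometric sum)^n
lemma sum_pow_digits (t : ℝ) : ∀ n : ℕ,
    ∑ w : Fin n → Fin p, t ^ (∑ i, ((w i : ℕ))) = (∑ d : Fin p, t ^ (d : ℕ)) ^ n := by
  intro n
  induction n with
  | zero => simp
  | succ n ih =>
    calc ∑ w : Fin (n + 1) → Fin p, t ^ (∑ i, ((w i : ℕ)))
        = ∑ x : Fin p × (Fin n → Fin p),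
            t ^ (∑ i, (((Fin.consEquiv fun _ => Fin p) x i : ℕ))) :=
          (Equiv.sum_comp (Fin.consEquiv fun _ => Fin p)
            (fun w : Fin (n + 1) → Fin p => t ^ (∑ i, ((w i : ℕ))))).symm
      _ = ∑ d : Fin p, ∑ w : Fin n → Fin p, t ^ ((d : ℕ) + ∑ i, ((w i : ℕ))) := by
          rw [Fintype.sum_prod_type]
          refine Finset.sum_congr rfl fun d _ => Finset.sum_congr rfl fun w _ => ?_
          congr 1
          rw [Fin.sum_univ_succ]
          simp [Fin.consEquiv]
      _ = (∑ d : Fin p, t ^ (d : ℕ)) ^ (n + 1) := by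
          simp only [pow_add]
          rw [← Finset.sum_mul_sum]
          rw [pow_succ, ← ih]
          ring


lemma geom_le {t : ℝ} (ht0 : 0 ≤ t) (ht1 : t < 1) :
    ∑ d : Fin p, t ^ (d : ℕ) ≤ (1 - t)⁻¹ := by
  rw [Fin.sum_univ_eq_sum_range (fun i => t ^ i) p]
  have h := geom_sum_mul (x := t) p
  have h1 : (∑ i ∈ Finset.range p, t ^ i) * (1 - t) ≤ 1 := by
    nlinarith [pow_nonneg ht0 p]
  rw [inv_eq_one_div, le_div_iff₀ (by linarith)]
  exact h1

lemma chern (hp : 2 ≤ p) {t δ : ℝ} (ht0 : 0 < t) (ht1 : t < 1) (hδ : 0 < δ) (n : ℕ) :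
    ((hcount p n 0 δ : ℕ) : ℝ) ≤ t⁻¹ ^ (⌈(n : ℝ) * δ⌉₊) * (1 - t)⁻¹ ^ n := by
  set M := ⌈(n : ℝ) * δ⌉₊ with hM
  set F := Finset.univ.filter (fun w : Fin n → Fin p => (∑ i, ((w i : ℕ))) ≤ M) with hF
  have hcard : hcount p n 0 δ ≤ F.card := by
    rw [hcount]
    have h1 : Nat.card {w : Fin n → Fin p //
        (n : ℝ) * (0 - δ) < ∑ i, ((w i : ℕ) : ℝ) ∧ (∑ i, ((w i : ℕ) : ℝ)) < n * (0 + δ)}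
        ≤ Nat.card {w : Fin n → Fin p // (∑ i, ((w i : ℕ))) ≤ M} := by
      refine Nat.card_le_card_of_injective (fun w => ⟨w.1, ?_⟩)
        (fun a b hab => Subtype.ext (by simpa using congrArg Subtype.val hab))
      have h2 := w.2.2
      have h3 : ((∑ i, ((w.1 i : ℕ)) : ℕ) : ℝ) < (n : ℝ) * δ := by push_cast; simpa using h2
      have h4 : ((∑ i, ((w.1 i : ℕ)) : ℕ) : ℝ) ≤ (M : ℝ) := h3.le.trans (Nat.le_ceil _)
      exact_mod_cast h4
    refine h1.trans ?_
    rw [Nat.card_eq_fintype_card, Fintype.card_subtype]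
  have hsum : (F.card : ℝ) * t ^ M ≤ (1 - t)⁻¹ ^ n := by
    calc (F.card : ℝ) * t ^ M = ∑ _w ∈ F, t ^ M := by rw [Finset.sum_const, nsmul_eq_mul]
      _ ≤ ∑ w ∈ F, t ^ (∑ i, ((w i : ℕ))) := by
          refine Finset.sum_le_sum fun w hw => ?_
          exact pow_le_pow_of_le_one ht0.le ht1.le (Finset.mem_filter.1 hw).2
      _ ≤ ∑ w : Fin n → Fin p, t ^ (∑ i, ((w i : ℕ))) := by
          refine Finset.sum_le_sum_of_subset_of_nonneg (Finset.filter_subset _ _)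
            fun w _ _ => by positivity
      _ = (∑ d : Fin p, t ^ (d : ℕ)) ^ n := sum_pow_digits t n
      _ ≤ (1 - t)⁻¹ ^ n := by
          refine pow_le_pow_left₀ ?_ (geom_le ht0.le ht1) n
          exact Finset.sum_nonneg fun d _ => by positivity
  have htM : (0 : ℝ) < t ^ M := by positivity
  calc ((hcount p n 0 δ : ℕ) : ℝ) ≤ (F.card : ℝ) := by exact_mod_cast hcard
    _ ≤ (1 - t)⁻¹ ^ n / t ^ M := by rw [le_div_iff₀ htM]; exact hsum
    _ = t⁻¹ ^ M * (1 - t)⁻¹ ^ n := by rw [div_eq_mul_inv, ← inv_pow]; ring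


lemma EL_zero_bound (hp : 2 ≤ p) {t δ : ℝ} (ht0 : 0 < t) (ht1 : t < 1) (hδ : 0 < δ)
    {n : ℕ} (hn : 1 ≤ (n : ℝ) * δ) :
    EL p 0 δ n ≤ (2 * δ * Real.log t⁻¹ + Real.log (1 - t)⁻¹) / Real.log p := by
  have hn0 : 0 < n := by
    rcases Nat.eq_zero_or_pos n with h | h
    · exfalso; rw [h] at hn; simp at hn; linarith
    · exact h
  have hlt1 : (0 : ℝ) ≤ Real.log t⁻¹ := Real.log_nonneg (one_le_inv_iff₀.2 ⟨ht0, ht1.le⟩)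
  have hlt2 : (0 : ℝ) ≤ Real.log (1 - t)⁻¹ :=
    Real.log_nonneg (one_le_inv_iff₀.2 ⟨by linarith, by linarith⟩)
  have hMr : (⌈(n : ℝ) * δ⌉₊ : ℝ) ≤ 2 * n * δ := by
    have h1 : (⌈(n : ℝ) * δ⌉₊ : ℝ) < (n : ℝ) * δ + 1 :=
      Nat.ceil_lt_add_one (by positivity)
    nlinarith
  have hlog : Real.log (hcount p n 0 δ) ≤
      (⌈(n : ℝ) * δ⌉₊ : ℝ) * Real.log t⁻¹ + n * Real.log (1 - t)⁻¹ := by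
    rcases Nat.eq_zero_or_pos (hcount p n 0 δ) with h | h
    · rw [h]; push_cast; rw [Real.log_zero]; positivity
    · calc Real.log (hcount p n 0 δ)
          ≤ Real.log (t⁻¹ ^ (⌈(n : ℝ) * δ⌉₊) * (1 - t)⁻¹ ^ n) := by
            apply Real.log_le_log (by exact_mod_cast h)
            exact chern hp ht0 ht1 hδ n
        _ = (⌈(n : ℝ) * δ⌉₊ : ℝ) * Real.log t⁻¹ + n * Real.log (1 - t)⁻¹ := by
            have h1t : (0:ℝ) < 1 - t := by linarith
            rw [Real.log_mul (pow_pos (inv_pos.2 ht0) _).ne' (pow_pos (inv_pos.2 h1t) _).ne',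
              Real.log_pow, Real.log_pow]
  rw [EL, div_le_div_iff₀ (mul_pos (by exact_mod_cast hn0) (logp_pos hp)) (logp_pos hp)]
  have hfin : (⌈(n : ℝ) * δ⌉₊ : ℝ) * Real.log t⁻¹ + n * Real.log (1 - t)⁻¹
      ≤ (2 * δ * Real.log t⁻¹ + Real.log (1 - t)⁻¹) * n := by
    nlinarith [mul_le_mul_of_nonneg_right hMr hlt1]
  calc Real.log (hcount p n 0 δ) * Real.log p
      ≤ ((2 * δ * Real.log t⁻¹ + Real.log (1 - t)⁻¹) * n) * Real.log p := by
        apply mul_le_mul_of_nonneg_right (hlog.trans hfin) (logp_pos hp).le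
    _ = (2 * δ * Real.log t⁻¹ + Real.log (1 - t)⁻¹) * (n * Real.log p) := by ring

lemma entropy_zero (hp : 2 ≤ p) : entropy p 0 = 0 := by
  refine le_antisymm ?_ (entropy_nonneg hp 0)
  refine le_of_forall_pos_le_add fun ε hε => ?_
  rw [zero_add]
  set u := Real.exp (ε * Real.log p / 4) with hu
  have hu1 : 1 < u := Real.one_lt_exp_iff.2 (by have := logp_pos hp; positivity)
  set t : ℝ := 1 - u⁻¹ with ht
  have ht0 : 0 < t := by
    have : u⁻¹ < 1 := inv_lt_one_of_one_lt₀ hu1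
    simp only [ht]; linarith
  have ht1 : t < 1 := by
    have : 0 < u⁻¹ := by positivity
    simp only [ht]; linarith
  have hlogu : Real.log (1 - t)⁻¹ = ε * Real.log p / 4 := by
    simp only [ht, sub_sub_cancel, inv_inv, hu, Real.log_exp]
  have hlt1 : (0 : ℝ) ≤ Real.log t⁻¹ := Real.log_nonneg (one_le_inv_iff₀.2 ⟨ht0, ht1.le⟩)
  set δ : ℝ := (ε * Real.log p / 4) / (Real.log t⁻¹ + 1) with hδdef
  have hδ : 0 < δ := by
    apply div_pos
    · have := logp_pos hp; positivity
    · linarith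
  have hbound : (2 * δ * Real.log t⁻¹ + Real.log (1 - t)⁻¹) / Real.log p ≤ ε := by
    have hc : δ * (Real.log t⁻¹ + 1) = ε * Real.log p / 4 := by
      rw [hδdef]; exact div_mul_cancel₀ _ (by linarith)
    have h1 : 2 * δ * Real.log t⁻¹ ≤ 2 * (ε * Real.log p / 4) := by nlinarith
    rw [hlogu, div_le_iff₀ (logp_pos hp)]
    nlinarith [logp_pos hp]
  refine le_trans (le_trans (entropy_le_g hp 0 hδ) ?_) hbound
  refine limsup_le_of_le (EL_cobdd 0 δ) ?_
  have hev : ∀ᶠ n : ℕ in atTop, 1 ≤ (n : ℝ) * δ := by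
    filter_upwards [eventually_ge_atTop ⌈δ⁻¹⌉₊] with n hn
    have h1 : δ⁻¹ ≤ (n : ℝ) := le_trans (Nat.le_ceil _) (by exact_mod_cast hn)
    calc (1:ℝ) = δ⁻¹ * δ := (inv_mul_cancel₀ hδ.ne').symm
      _ ≤ (n : ℝ) * δ := mul_le_mul_of_nonneg_right h1 hδ.le
  filter_upwards [hev] with n hn
  exact EL_zero_bound hp ht0 ht1 hδ hn


lemma arith9 {c ε t : ℝ} (k m : ℕ) (hc0 : 0 < c) (hc1 : c ≤ 1) (ht0 : 0 < t) (ht1 : t < 1)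
    (hε : 0 < ε) (hkpos : (0:ℝ) < k)
    (hst2 : t * m < (1 - t) * k + t)
    (hkR1 : 2 / ε ≤ (k:ℝ)) :
    c - ε/2 ≤ ((k:ℝ) / ((k:ℝ) + m)) * (c / t) := by
  have hkm0 : (0:ℝ) < (k:ℝ) + (m:ℝ) := by positivity
  rcases le_or_gt (c - ε/2) 0 with hle | hgt
  · exact hle.trans (by positivity)
  · have hkm_t : ((k:ℝ) + m) * t ≤ (k:ℝ) + t := by nlinarith [hst2]
    have hek : 1 ≤ (ε/2) * k := by
      have := mul_le_mul_of_nonneg_right hkR1 (le_of_lt hε)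
      rw [div_mul_cancel₀ _ hε.ne'] at this
      linarith
    have hct : c * t ≤ 1 := by
      have := mul_le_of_le_one_right (le_of_lt hc0) ht1.le
      linarith
    have hnum : (c - ε/2) * (((k:ℝ) + m) * t) ≤ (k:ℝ) * c := by
      have ha := mul_le_mul_of_nonneg_left hkm_t hgt.le
      have hb : (0:ℝ) ≤ (ε/2) * t := by positivity
      nlinarith
    rw [div_mul_div_comm, le_div_iff₀ (mul_pos hkm0 ht0)]
    exact hnum

set_option maxHeartbeats 1000000 in
lemma concave (hp : 2 ≤ p) {α₀ β t : ℝ} (hα₀ : α₀ ∈ Icc (0:ℝ) ((p:ℝ)-1))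
    (hβ : β ∈ Icc (0:ℝ) ((p:ℝ)-1)) (ht0 : 0 < t) (ht1 : t < 1) :
    t * entropy p α₀ ≤ entropy p (t * α₀ + (1 - t) * β) := by
  have hpR : (2 : ℝ) ≤ p := by exact_mod_cast hp
  set α := t * α₀ + (1 - t) * β with hαdef
  clear_value α
  rw [entropy_def]
  refine le_ciInf fun δs => ?_
  obtain ⟨δ, hδ⟩ := δs
  have hEα₀ : entropy p α₀ ≤ g p α₀ (δ/2) := entropy_le_g hp α₀ (by positivity)
  suffices key : t * g p α₀ (δ/2) ≤ g p α δ by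
    calc t * entropy p α₀ ≤ t * g p α₀ (δ/2) := mul_le_mul_of_nonneg_left hEα₀ ht0.le
      _ ≤ g p α δ := key
  have hG1 : g p α₀ (δ/2) ≤ 1 := g_le_one hp _ _
  have hG0 : 0 ≤ g p α₀ (δ/2) := g_nonneg hp _ _
  have hA0 : 0 ≤ g p α δ := g_nonneg hp _ _
  have main : ∀ ε : ℝ, 0 < ε → t * g p α₀ (δ/2) - ε ≤ g p α δ := by
    intro ε hε
    rcases le_or_gt (t * g p α₀ (δ/2) - ε / 2) 0 with hc0 | hc0
    · linarith
    obtain ⟨c, hcdef⟩ : ∃ c : ℝ, c = t * g p α₀ (δ/2) - ε / 2 := ⟨_, rfl⟩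
    rw [← hcdef] at hc0
    have hcG : c / t < g p α₀ (δ/2) := by rw [div_lt_iff₀ ht0, hcdef]; linarith only [hε]
    have hct0 : 0 ≤ c / t := by positivity
    have htG1 : t * g p α₀ (δ/2) ≤ 1 := mul_le_one₀ ht1.le hG0 hG1
    have hc1 : c ≤ 1 := by rw [hcdef]; linarith only [htG1, hε]
    have freq : ∃ᶠ k in atTop, c / t < EL p α₀ (δ/2) k :=
      frequently_lt_of_lt_limsup (EL_cobdd α₀ (δ/2)) hcG
    rw [frequently_atTop] at freq
    obtain ⟨K, hK⟩ := exists_nat_ge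
      (max (max (2 / ε) (2 * t / (δ * (1 - t)) + 1)) (2 * (p : ℝ) / δ))
    refine le_limsup_of_frequently_le ?_ (EL_bddU hp α δ)
    rw [frequently_atTop]
    intro N
    obtain ⟨k, hk1, hk2⟩ := freq (max N K)
    have hkK : (K : ℝ) ≤ (k : ℝ) := by exact_mod_cast le_trans (le_max_right N K) hk1
    have hkR1 : 2 / ε ≤ (k : ℝ) :=
      le_trans (le_trans (le_max_left _ _) (le_max_left _ _)) (hK.trans hkK)
    have hkR2 : 2 * t / (δ * (1 - t)) + 1 ≤ (k : ℝ) :=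
      le_trans (le_trans (le_max_right _ _) (le_max_left _ _)) (hK.trans hkK)
    have hkR3 : 2 * (p : ℝ) / δ ≤ (k : ℝ) :=
      le_trans (le_max_right _ _) (hK.trans hkK)
    have hkpos : (0 : ℝ) < k := by
      have h0 : (0:ℝ) < 2 * (p:ℝ) / δ := by positivity
      linarith only [h0, hkR3]
    have hk0 : 0 < k := by exact_mod_cast hkpos
    have h1t : (0:ℝ) < 1 - t := by linarith
    obtain ⟨m, hmdef⟩ : ∃ m : ℕ, m = ⌈(1 - t) * k / t⌉₊ := ⟨_, rfl⟩
    have hmlb : (1 - t) * k / t ≤ (m : ℝ) := hmdef ▸ Nat.le_ceil _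
    have hmub : (m : ℝ) < (1 - t) * k / t + 1 := by
      rw [hmdef]
      exact Nat.ceil_lt_add_one (by positivity)
    have hst1 : (1 - t) * k ≤ t * m := by
      have := mul_le_mul_of_nonneg_left hmlb ht0.le
      rwa [mul_div_cancel₀ _ ht0.ne'] at this
    have hst2 : t * m < (1 - t) * k + t := by
      have := mul_lt_mul_of_pos_left hmub ht0
      rwa [mul_add, mul_div_cancel₀ _ ht0.ne', mul_one] at this
    have hkp : 2 * (p : ℝ) ≤ (k : ℝ) * δ := by
      have := mul_le_mul_of_nonneg_right hkR3 hδ.le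
      rwa [div_mul_cancel₀ _ hδ.ne'] at this
    have hkd2 : 1 < (k : ℝ) * (δ / 2) := by
      have h0 : (k:ℝ) * (δ/2) = ((k:ℝ) * δ)/2 := by ring
      rw [h0]; linarith only [hkp, hpR]
    have hmd2 : 1 < (m : ℝ) * (δ / 2) := by
      have h1 : (2 * t / (δ * (1 - t))) * (δ * (1 - t)) ≤ ((k:ℝ) - 1) * (δ * (1 - t)) :=
        mul_le_mul_of_nonneg_right (by linarith) (by positivity)
      rw [div_mul_cancel₀ _ (by positivity : (δ * (1 - t)) ≠ 0)] at h1
      have hX : 2 * t < (1 - t) * k * δ := by linarith only [h1, mul_pos hδ h1t]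
      have h2 : (1:ℝ) < ((1 - t) * k / t) * (δ / 2) := by
        rw [div_mul_eq_mul_div, lt_div_iff₀ ht0]
        linarith only [hX]
      have h3 := mul_le_mul_of_nonneg_right hmlb (by linarith only [hδ] : (0:ℝ) ≤ δ/2)
      linarith only [h2, h3]
    have h1c : 1 ≤ hcount p k α₀ (δ/2) := one_le_hcount hp hα₀.1 hα₀.2 hkd2
    have h2c : 1 ≤ hcount p m β (δ/2) := one_le_hcount hp hβ.1 hβ.2 hmd2
    have hd1 : α₀ - β ≤ (p : ℝ) - 1 := by linarith only [hα₀.2, hβ.1]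
    have hd2 : -((p : ℝ) - 1) ≤ α₀ - β := by linarith only [hα₀.1, hβ.2]
    have hs0 : 0 ≤ t * m - (1 - t) * k := by linarith only [hst1]
    have hp1 : (0:ℝ) ≤ (p : ℝ) - 1 := by linarith only [hpR]
    have hds1 : (α₀ - β) * (t * m - (1 - t) * k) ≤ ((p:ℝ) - 1) * t := by
      calc (α₀ - β) * (t * m - (1 - t) * k) ≤ ((p:ℝ) - 1) * (t * m - (1 - t) * k) :=
            mul_le_mul_of_nonneg_right hd1 hs0
        _ ≤ ((p:ℝ) - 1) * t := mul_le_mul_of_nonneg_left (by linarith) hp1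
    have hds2 : -(((p:ℝ) - 1) * t) ≤ (α₀ - β) * (t * m - (1 - t) * k) := by
      have h1 : (-((p:ℝ) - 1)) * (t * m - (1 - t) * k) ≤ (α₀ - β) * (t * m - (1 - t) * k) :=
        mul_le_mul_of_nonneg_right hd2 hs0
      have h2 : ((p:ℝ) - 1) * (t * m - (1 - t) * k) ≤ ((p:ℝ) - 1) * t :=
        mul_le_mul_of_nonneg_left (by linarith only [hst2]) hp1
      linarith only [h1, h2]
    have h4 : ((p:ℝ) - 1) * t ≤ (p:ℝ) - 1 := mul_le_of_le_one_right hp1 ht1.le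
    have h5 : (0:ℝ) ≤ (m:ℝ) * δ := by positivity
    have h6 : (p:ℝ) ≤ (k:ℝ) * δ / 2 := by linarith only [hkp]
    have hw1 : ((k + m : ℕ) : ℝ) * (α - δ) ≤ k * (α₀ - δ/2) + m * (β - δ/2) := by
      push_cast
      rw [hαdef]
      linarith only [hds1, h4, h5, h6]
    have hw2 : (k : ℝ) * (α₀ + δ/2) + m * (β + δ/2) ≤ ((k + m : ℕ) : ℝ) * (α + δ) := by
      push_cast
      rw [hαdef]
      linarith only [hds2, h4, h5, h6]
    have hmul : hcount p k α₀ (δ/2) * hcount p m β (δ/2) ≤ hcount p (k + m) α δ :=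
      hcount_mul_le p k m hw1 hw2
    have hlogk : Real.log (hcount p k α₀ (δ/2)) ≤ Real.log (hcount p (k + m) α δ) := by
      apply log_nat_mono
      calc hcount p k α₀ (δ/2) = hcount p k α₀ (δ/2) * 1 := (mul_one _).symm
        _ ≤ hcount p k α₀ (δ/2) * hcount p m β (δ/2) := Nat.mul_le_mul_left _ h2c
        _ ≤ hcount p (k + m) α δ := hmul
    refine ⟨k + m, le_trans (le_trans (le_max_left N K) hk1) (Nat.le_add_right k m), ?_⟩
    have hkm0 : (0:ℝ) < (k:ℝ) + (m:ℝ) := by positivity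
    have hlp := logp_pos hp
    have hELn : Real.log (hcount p k α₀ (δ/2)) / (((k:ℝ) + m) * Real.log p)
        ≤ EL p α δ (k + m) := by
      rw [EL]
      have hcast : (((k + m : ℕ)) : ℝ) = (k:ℝ) + m := by push_cast; ring
      rw [hcast]
      have := mul_le_mul_of_nonneg_right hlogk (inv_nonneg.2 (mul_pos hkm0 hlp).le)
      simpa [div_eq_mul_inv] using this
    have h7 : ((k:ℝ) / ((k:ℝ) + m)) * (c / t) ≤ ((k:ℝ) / ((k:ℝ) + m)) * EL p α₀ (δ/2) k :=
      mul_le_mul_of_nonneg_left hk2.le (by positivity)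
    have h8 : ((k:ℝ) / ((k:ℝ) + m)) * EL p α₀ (δ/2) k
        = Real.log (hcount p k α₀ (δ/2)) / (((k:ℝ) + m) * Real.log p) := by
      rw [EL]
      field_simp
    have h9 : c - ε/2 ≤ ((k:ℝ) / ((k:ℝ) + m)) * (c / t) :=
      arith9 k m hc0 hc1 ht0 ht1 hε hkpos hst2 hkR1
    have hfinal : c - ε/2 ≤ EL p α δ (k + m) := by
      rw [h8] at h7
      exact le_trans h9 (le_trans h7 hELn)
    rw [hcdef] at hfinal
    linarith only [hfinal]
  by_contra hcon
  push_neg at hcon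
  have hm2 := main ((t * g p α₀ (δ/2) - g p α δ) / 2) (by linarith only [hcon])
  linarith only [hm2, hcon]

end EntropyCont

/-- For an integer `p ≥ 2`, the `p`-adic entropy function is continuous
on `[0, p-1]`. -/
theorem entropy_continuousOn (p : ℕ) (hp : 2 ≤ p) :
    ContinuousOn (entropy p) (Icc (0 : ℝ) ((p : ℝ) - 1)) := by
  have hpR : (2 : ℝ) ≤ p := by exact_mod_cast hp
  have hpm1 : entropy p ((p : ℝ) - 1) = 0 := by
    have h := EntropyCont.entropy_rev hp 0
    rw [sub_zero] at h
    rw [h, EntropyCont.entropy_zero hp]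
  rw [Metric.continuousOn_iff]
  intro α₀ hα₀ ε hε
  obtain ⟨θ₁, hθ₁, husc⟩ := EntropyCont.usc hp α₀ (show (0:ℝ) < ε/2 by linarith)
  rcases le_or_gt (entropy p α₀) (ε/2) with hsmall | hbig
  · refine ⟨θ₁, hθ₁, fun α hα hdist => ?_⟩
    rw [Real.dist_eq] at hdist ⊢
    rw [abs_sub_lt_iff]
    have hu := husc α hdist.le
    constructor
    · linarith
    · linarith [EntropyCont.entropy_nonneg hp α]
  · have hα00 : 0 < α₀ := by
      rcases lt_or_eq_of_le hα₀.1 with h | h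
      · exact h
      · exfalso; rw [← h, EntropyCont.entropy_zero hp] at hbig; linarith
    have hα0p : α₀ < (p : ℝ) - 1 := by
      rcases lt_or_eq_of_le hα₀.2 with h | h
      · exact h
      · exfalso; rw [h, hpm1] at hbig; linarith
    set c₀ := min α₀ ((p : ℝ) - 1 - α₀) with hc₀def
    have hc₀ : 0 < c₀ := lt_min hα00 (by linarith)
    have hc₀a : c₀ ≤ α₀ := min_le_left _ _
    have hc₀b : c₀ ≤ (p : ℝ) - 1 - α₀ := min_le_right _ _
    set θ₂ := min (c₀ / 2) ((ε / 2) * c₀) with hθ₂def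
    have hθ₂pos : 0 < θ₂ := lt_min (by linarith) (by positivity)
    have hθ₂a : θ₂ ≤ c₀ / 2 := min_le_left _ _
    have hθ₂b : θ₂ ≤ (ε / 2) * c₀ := min_le_right _ _
    refine ⟨min θ₁ θ₂, lt_min hθ₁ hθ₂pos, fun α hα hdist => ?_⟩
    rw [Real.dist_eq] at hdist
    have hd1 : |α - α₀| < θ₁ := lt_of_lt_of_le hdist (min_le_left _ _)
    have hd2 : |α - α₀| < θ₂ := lt_of_lt_of_le hdist (min_le_right _ _)
    have habs := abs_lt.1 hd2
    rw [Real.dist_eq, abs_sub_lt_iff]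
    have hu := husc α hd1.le
    refine ⟨by linarith, ?_⟩
    have h1e := EntropyCont.entropy_le_one hp α₀
    rcases lt_trichotomy α α₀ with hlt | heq | hgt
    · have hαpos : 0 < α := by linarith
      have ht0 : 0 < α / α₀ := div_pos hαpos hα00
      have ht1 : α / α₀ < 1 := (div_lt_one hα00).2 hlt
      have hkey := EntropyCont.concave hp hα₀ (show (0:ℝ) ∈ Icc (0:ℝ) ((p:ℝ)-1) from ⟨le_rfl, by linarith⟩)
        ht0 ht1
      have harg : (α / α₀) * α₀ + (1 - α / α₀) * 0 = α := by field_simp; ring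
      rw [harg] at hkey
      have h2 : entropy p α₀ - entropy p α ≤ (1 - α / α₀) * entropy p α₀ := by
        linarith only [hkey]
      have h3 : (1 - α / α₀) * entropy p α₀ ≤ (1 - α / α₀) * 1 :=
        mul_le_mul_of_nonneg_left h1e (by linarith)
      have h4 : 1 - α / α₀ = (α₀ - α) / α₀ := by field_simp
      have h5 : (α₀ - α) / α₀ < θ₂ / α₀ := (div_lt_div_iff_of_pos_right hα00).2 (by linarith)
      have h6 : θ₂ / α₀ ≤ ε / 2 := by
        rw [div_le_iff₀ hα00]
        calc θ₂ ≤ (ε / 2) * c₀ := hθ₂b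
          _ ≤ (ε / 2) * α₀ := mul_le_mul_of_nonneg_left hc₀a (by linarith)
          _ = ε / 2 * α₀ := by ring
      linarith only [h2, h3, h4, h5, h6, hε]
    · rw [heq]; linarith
    · have hq : 0 < (p : ℝ) - 1 - α₀ := by linarith
      have hαlt : α < (p : ℝ) - 1 := by linarith
      have ht0 : 0 < ((p:ℝ) - 1 - α) / ((p:ℝ) - 1 - α₀) := div_pos (by linarith) hq
      have ht1 : ((p:ℝ) - 1 - α) / ((p:ℝ) - 1 - α₀) < 1 := (div_lt_one hq).2 (by linarith)
      have hkey := EntropyCont.concave hp hα₀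
        (show ((p:ℝ)-1) ∈ Icc (0:ℝ) ((p:ℝ)-1) from ⟨by linarith, le_rfl⟩) ht0 ht1
      have harg : (((p:ℝ) - 1 - α) / ((p:ℝ) - 1 - α₀)) * α₀
          + (1 - ((p:ℝ) - 1 - α) / ((p:ℝ) - 1 - α₀)) * ((p:ℝ) - 1) = α := by
        field_simp
        ring
      rw [harg] at hkey
      have h2 : entropy p α₀ - entropy p α
          ≤ (1 - ((p:ℝ) - 1 - α) / ((p:ℝ) - 1 - α₀)) * entropy p α₀ := by
        linarith only [hkey]
      have h3 : (1 - ((p:ℝ) - 1 - α) / ((p:ℝ) - 1 - α₀)) * entropy p α₀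
          ≤ (1 - ((p:ℝ) - 1 - α) / ((p:ℝ) - 1 - α₀)) * 1 :=
        mul_le_mul_of_nonneg_left h1e (by linarith)
      have h4 : 1 - ((p:ℝ) - 1 - α) / ((p:ℝ) - 1 - α₀) = (α - α₀) / ((p:ℝ) - 1 - α₀) := by
        field_simp
        ring
      have h5 : (α - α₀) / ((p:ℝ) - 1 - α₀) < θ₂ / ((p:ℝ) - 1 - α₀) :=
        (div_lt_div_iff_of_pos_right hq).2 (by linarith)
      have h6 : θ₂ / ((p:ℝ) - 1 - α₀) ≤ ε / 2 := by
        rw [div_le_iff₀ hq]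
        calc θ₂ ≤ (ε / 2) * c₀ := hθ₂b
          _ ≤ (ε / 2) * ((p:ℝ) - 1 - α₀) := mul_le_mul_of_nonneg_left hc₀b (by linarith)
      linarith only [h2, h3, h4, h5, h6, hε]
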